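/- Under Assumption (A), for every n ≥ 1 and every nonnegative measure μ ∈ M₊(W_S) with μ(η_S) > 0 and μ(n^{j_S(·)} W_S) < ∞, the total variation distance between ℙ_μ(X_n ∈ · | n < τ_∂) and the probability measure (Σ_{i∈I_S} μ(n^{j_S(·)} η_{S,i}) ν_{S,i}) / (Σ_{i∈I_S} μ(n^{j_S(·)} η_{S,i})) is at most 2 α_{S,n} μ(n^{j_S(·)} W_S) / μ(n^{j_S(·)} η_S). -/

import Mathlib

open MeasureTheory ProbabilityTheory Filter ENNReal

variable {α : Type*} [MeasurableSpace α]

noncomputable def kmass (S : ℕ → Kernel α α) (n : ℕ) (μ : Measure α) : ℝ≥0∞ :=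
  Measure.bind μ (fun x => S n x) Set.univ

noncomputable def expParam (S : ℕ → Kernel α α) (μ : Measure α) : ℝ≥0∞ :=
  sInf {θ : ℝ≥0∞ | Filter.liminf (fun n : ℕ => θ⁻¹ ^ n * kmass S n μ) Filter.atTop = 0}

noncomputable def theta0 (S : ℕ → Kernel α α) : ℝ≥0∞ :=
  ⨆ x : α, expParam S (Measure.dirac x)

noncomputable def polyParam (S : ℕ → Kernel α α) (μ : Measure α) : ℝ :=
  sInf {l : ℝ | 0 ≤ l ∧
    Filter.liminf (fun n : ℕ => (n : ℝ≥0∞) ^ (-l) * (theta0 S)⁻¹ ^ n * kmass S n μ)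
      Filter.atTop = 0}

noncomputable def jfun (S : ℕ → Kernel α α) (x : α) : ℝ :=
  polyParam S (Measure.dirac x)

def IsSubMarkovSemigroup (S : ℕ → Kernel α α) : Prop :=
  S 0 = Kernel.id ∧ (∀ n m, S (n + m) = (S m) ∘ₖ (S n)) ∧ ∀ n x, (S n) x Set.univ ≤ 1

/-- **Assumption (A)** of Champagnat–Villemonais, for the sub-Markovian semigroup `S`,
with weight function `W`, probability measures `ν i`, functions `η i` (`i` in the finite or
countable index set `I`) and rate sequence `a`. -/
structure AssumptionA (S : ℕ → Kernel α α) {I : Type} (W : α → ℝ)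
    (ν : I → Measure α) (η : I → α → ℝ) (a : ℕ → ℝ) : Prop where
  countable : Countable I
  theta0_pos : 0 < theta0 S
  theta0_le_one : theta0 S ≤ 1
  j_nat : ∀ x : α, ∃ k : ℕ, jfun S x = (k : ℝ)
  W_meas : Measurable W
  one_le_W : ∀ x, 1 ≤ W x
  nu_prob : ∀ i, IsProbabilityMeasure (ν i)
  nu_W : ∀ i, ∫⁻ x, ENNReal.ofReal (W x) ∂(ν i) ≠ ∞
  eta_meas : ∀ i, Measurable (η i)
  eta_nonneg : ∀ i x, 0 ≤ η i x
  eta_ne_zero : ∀ i, η i ≠ 0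
  eta_bdd : ∀ i, ∃ C : ℝ, ∀ x, η i x ≤ C * W x
  summable_etanu : ∀ x, Summable (fun i => η i x * (∫⁻ y, ENNReal.ofReal (W y) ∂(ν i)).toReal)
  etanu_bdd : ∃ C : ℝ, ∀ x,
    (∑' i, η i x * (∫⁻ y, ENNReal.ofReal (W y) ∂(ν i)).toReal) ≤ C * W x
  SW_fin : ∀ n x, ∫⁻ y, ENNReal.ofReal (W y) ∂(S n x) ≠ ∞
  a_nonneg : ∀ n, 0 ≤ a n
  a_tendsto : Tendsto a atTop (nhds 0)
  approx : ∀ f : α → ℝ, Measurable f → ∀ c : ℝ, 0 ≤ c → (∀ x, |f x| ≤ c * W x) →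
    ∀ n : ℕ, 1 ≤ n → ∀ x : α,
      |((theta0 S).toReal)⁻¹ ^ n * (n : ℝ) ^ (-(jfun S x)) * (∫ y, f y ∂(S n x)) -
        ∑' i, η i x * ∫ y, f y ∂(ν i)| ≤ a n * W x * c

/-- `ν` is a quasi-stationary distribution for `S`. -/
def IsQSD (S : ℕ → Kernel α α) (ν : Measure α) : Prop :=
  IsProbabilityMeasure ν ∧ ∀ n, kmass S n ν ≠ 0 ∧
    Measure.bind ν (fun x => S n x) = kmass S n ν • ν

/- ### Auxiliary lemmas -/

lemma kmass_dirac (S : ℕ → Kernel α α) (n : ℕ) (x : α) :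
    kmass S n (Measure.dirac x) = S n x Set.univ := by
  rw [kmass, Measure.dirac_bind (Kernel.measurable (S n))]

/-- The set of polynomial rates defining `jfun`. -/
def Jset (S : ℕ → Kernel α α) (x : α) : Set ℝ :=
  {l : ℝ | 0 ≤ l ∧
    Filter.liminf (fun n : ℕ => (n : ℝ≥0∞) ^ (-l) * (theta0 S)⁻¹ ^ n * S n x Set.univ)
      Filter.atTop = 0}

lemma jfun_eq_sInf (S : ℕ → Kernel α α) (x : α) : jfun S x = sInf (Jset S x) := by
  simp only [jfun, polyParam, Jset, kmass_dirac]

lemma Jset_mono (S : ℕ → Kernel α α) {x : α} {l l' : ℝ} (h : l ∈ Jset S x) (hll' : l ≤ l') :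
    l' ∈ Jset S x := by
  refine ⟨h.1.trans hll', le_antisymm ?_ zero_le⟩
  rw [← h.2]
  refine Filter.liminf_le_liminf ?_
  filter_upwards [Filter.eventually_ge_atTop 1] with n hn
  have h1 : (1 : ℝ≥0∞) ≤ (n : ℝ≥0∞) := by exact_mod_cast hn
  exact mul_le_mul_left
    (mul_le_mul_left (ENNReal.rpow_le_rpow_of_exponent_le h1 (neg_le_neg hll')) _) _

lemma Jset_bddBelow (S : ℕ → Kernel α α) (x : α) : BddBelow (Jset S x) :=
  ⟨0, fun _ hl => hl.1⟩

section AuxA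

variable {S : ℕ → Kernel α α} {I : Type} {W : α → ℝ} {ν : I → Measure α} {η : I → α → ℝ}
  {a : ℕ → ℝ}

lemma jfun_nonneg (hA : AssumptionA S W ν η a) (x : α) : 0 ≤ jfun S x := by
  obtain ⟨k, hk⟩ := hA.j_nat x
  rw [hk]; positivity

lemma Jset_nonempty (hS : IsSubMarkovSemigroup S) (hA : AssumptionA S W ν η a) (x : α) :
    (Jset S x).Nonempty := by
  have hθ0 : theta0 S ≠ 0 := hA.theta0_pos.ne'
  refine ⟨jfun S x + 1, by linarith [jfun_nonneg hA x], ?_⟩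
  have happ := hA.approx (fun _ => 1) measurable_const 1 zero_le_one
    (fun y => by simpa using hA.one_le_W y)
  set es : ℝ := ∑' i, η i x * ∫ y, (1 : ℝ) ∂(ν i) with hes
  have hkey : ∀ n : ℕ, 1 ≤ n →
      (n : ℝ≥0∞) ^ (-(jfun S x + 1)) * (theta0 S)⁻¹ ^ n * S n x Set.univ ≤
        (n : ℝ≥0∞)⁻¹ * ENNReal.ofReal (es + a n * W x) := by
    intro n hn
    have hnpos : (0 : ℝ) < n := by exact_mod_cast hn
    have hne : (n : ℝ≥0∞) ≠ 0 := by exact_mod_cast (Nat.pos_of_ne_zero (by omega)).ne'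
    have hnt : (n : ℝ≥0∞) ≠ ∞ := ENNReal.natCast_ne_top n
    have hsplit : (n : ℝ≥0∞) ^ (-(jfun S x + 1)) =
        (n : ℝ≥0∞)⁻¹ * (n : ℝ≥0∞) ^ (-(jfun S x)) := by
      rw [show -(jfun S x + 1) = (-1 : ℝ) + (-(jfun S x)) by ring,
        ENNReal.rpow_add _ _ hne hnt, ENNReal.rpow_neg_one]
    rw [hsplit, mul_assoc, mul_assoc]
    refine mul_le_mul_right ?_ _
    rw [← mul_assoc]
    have hSnt : S n x Set.univ ≠ ∞ := ((hS.2.2 n x).trans_lt ENNReal.one_lt_top).ne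
    have h1 : (n : ℝ≥0∞) ^ (-(jfun S x)) = ENNReal.ofReal ((n : ℝ) ^ (-(jfun S x))) := by
      rw [← ENNReal.ofReal_rpow_of_pos hnpos, ENNReal.ofReal_natCast]
    have h2 : (theta0 S)⁻¹ ^ n = ENNReal.ofReal (((theta0 S).toReal)⁻¹ ^ n) := by
      rw [ENNReal.ofReal_pow (by positivity), ← ENNReal.toReal_inv,
        ENNReal.ofReal_toReal (by simp [hθ0])]
    have h3 : S n x Set.univ = ENNReal.ofReal ((S n x Set.univ).toReal) := by
      rw [ENNReal.ofReal_toReal hSnt]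
    rw [h1, h2, h3, ← ENNReal.ofReal_mul (by positivity), ← ENNReal.ofReal_mul (by positivity)]
    refine ENNReal.ofReal_le_ofReal ?_
    have hb := happ n hn x
    have hint : ∫ y, (1 : ℝ) ∂(S n x) = (S n x Set.univ).toReal := by
      simp [integral_const, Measure.real]
    rw [hint] at hb
    have habs := abs_le.1 hb
    nlinarith [habs.2, habs.1]
  have hlim : Tendsto (fun n : ℕ => (n : ℝ≥0∞)⁻¹ * ENNReal.ofReal (es + a n * W x)) atTop
      (nhds 0) := by
    have h1 : Tendsto (fun n : ℕ => (n : ℝ≥0∞)⁻¹) atTop (nhds 0) :=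
      ENNReal.tendsto_inv_nat_nhds_zero
    have h2 : Tendsto (fun n : ℕ => ENNReal.ofReal (es + a n * W x)) atTop
        (nhds (ENNReal.ofReal (es + 0 * W x))) := by
      refine (ENNReal.continuous_ofReal.tendsto _).comp ?_
      exact (tendsto_const_nhds.add ((hA.a_tendsto.mul_const (W x))))
    have := ENNReal.Tendsto.mul h1 (Or.inr ENNReal.ofReal_ne_top) h2
      (Or.inr (by simp))
    simpa using this
  refine le_antisymm ?_ zero_le
  calc Filter.liminf (fun n : ℕ => (n : ℝ≥0∞) ^ (-(jfun S x + 1)) * (theta0 S)⁻¹ ^ n *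
      S n x Set.univ) atTop
      ≤ Filter.liminf (fun n : ℕ => (n : ℝ≥0∞)⁻¹ * ENNReal.ofReal (es + a n * W x)) atTop := by
        refine Filter.liminf_le_liminf ?_
        filter_upwards [Filter.eventually_ge_atTop 1] with n hn using hkey n hn
    _ = 0 := hlim.liminf_eq

lemma jfun_measurable (hS : IsSubMarkovSemigroup S) (hA : AssumptionA S W ν η a) :
    Measurable (jfun S) := by
  apply measurable_of_Iio
  intro q
  have hset : jfun S ⁻¹' Set.Iio q = ⋃ (l : ℚ) (_ : 0 ≤ (l : ℝ) ∧ (l : ℝ) < q),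
      {x : α | Filter.liminf
        (fun n : ℕ => (n : ℝ≥0∞) ^ (-(l : ℝ)) * (theta0 S)⁻¹ ^ n * S n x Set.univ)
        Filter.atTop = 0} := by
    ext x
    simp only [Set.mem_preimage, Set.mem_Iio, Set.mem_iUnion, Set.mem_setOf_eq]
    constructor
    · intro h
      rw [jfun_eq_sInf] at h
      obtain ⟨l₀, hl₀, hl₀q⟩ :=
        (csInf_lt_iff (Jset_bddBelow S x) (Jset_nonempty hS hA x)).1 h
      obtain ⟨l, hl1, hl2⟩ := exists_rat_btwn hl₀q
      exact ⟨l, ⟨hl₀.1.trans hl1.le, hl2⟩, (Jset_mono S hl₀ hl1.le).2⟩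
    · rintro ⟨l, ⟨hl0, hlq⟩, hlim⟩
      rw [jfun_eq_sInf]
      exact lt_of_le_of_lt (csInf_le (Jset_bddBelow S x) ⟨hl0, hlim⟩) hlq
  rw [hset]
  refine MeasurableSet.iUnion fun l => MeasurableSet.iUnion fun _ => ?_
  have hm : Measurable fun x : α => Filter.liminf
      (fun n : ℕ => (n : ℝ≥0∞) ^ (-(l : ℝ)) * (theta0 S)⁻¹ ^ n * S n x Set.univ)
      Filter.atTop := by
    refine Measurable.liminf fun n => ?_
    exact (measurable_const.mul measurable_const).mul
      (Kernel.measurable_coe (S n) MeasurableSet.univ)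
  exact hm (measurableSet_singleton 0)

end AuxA

lemma ofReal_max_zero' (r : ℝ) : ENNReal.ofReal r = ENNReal.ofReal (max r 0) := by
  rcases le_total r 0 with h | h
  · rw [ENNReal.ofReal_of_nonpos h, max_eq_right h, ENNReal.ofReal_zero]
  · rw [max_eq_left h]

lemma measurable_tsum_real {I : Type} [Countable I] {f : I → α → ℝ}
    (hf : ∀ i, Measurable (f i)) (hs : ∀ x, Summable fun i => |f i x|) :
    Measurable fun x => ∑' i, f i x := by
  have key : ∀ x, ∑' i, f i x =
      (∑' i, ENNReal.ofReal (f i x)).toReal - (∑' i, ENNReal.ofReal (-f i x)).toReal := by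
    intro x
    have hpos : Summable fun i => max (f i x) 0 :=
      (hs x).of_nonneg_of_le (fun i => le_max_right _ _)
        (fun i => max_le (le_abs_self _) (abs_nonneg _))
    have hneg : Summable fun i => max (-f i x) 0 :=
      (hs x).of_nonneg_of_le (fun i => le_max_right _ _)
        (fun i => max_le (by rw [← abs_neg]; exact le_abs_self _) (abs_nonneg _))
    have h1 : (∑' i, ENNReal.ofReal (f i x)) = ENNReal.ofReal (∑' i, max (f i x) 0) := by
      rw [ENNReal.ofReal_tsum_of_nonneg (fun i => le_max_right _ _) hpos]
      exact tsum_congr fun i => (ofReal_max_zero' _)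
    have h2 : (∑' i, ENNReal.ofReal (-f i x)) = ENNReal.ofReal (∑' i, max (-f i x) 0) := by
      rw [ENNReal.ofReal_tsum_of_nonneg (fun i => le_max_right _ _) hneg]
      exact tsum_congr fun i => (ofReal_max_zero' _)
    rw [h1, h2, ENNReal.toReal_ofReal (tsum_nonneg fun i => le_max_right _ _),
      ENNReal.toReal_ofReal (tsum_nonneg fun i => le_max_right _ _), ← hpos.tsum_sub hneg]
    refine tsum_congr fun i => ?_
    rcases le_total (f i x) 0 with h | h
    · rw [max_eq_right h, max_eq_left (neg_nonneg.2 h)]; ring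
    · rw [max_eq_left h, max_eq_right (neg_nonpos.2 h)]; ring
  simp_rw [key]
  exact ((Measurable.ennreal_tsum fun i => (hf i).ennreal_ofReal).ennreal_toReal).sub
    ((Measurable.ennreal_tsum fun i => (hf i).neg.ennreal_ofReal).ennreal_toReal)

lemma integral_bind_kernel (μ : Measure α) [IsFiniteMeasure μ] (κ : Kernel α α)
    [IsFiniteKernel κ] {f : α → ℝ} (hf : Measurable f) (hb : ∀ x, |f x| ≤ 1) :
    ∫ y, f y ∂(Measure.bind μ (fun x => κ x)) = ∫ x, ∫ y, f y ∂(κ x) ∂μ := by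
  have hmap : Measure.bind μ (fun x => κ x) = (μ ⊗ₘ κ).map Prod.snd := by
    ext s hs
    rw [Measure.bind_apply hs (κ.measurable.aemeasurable), Measure.map_apply measurable_snd hs,
      Measure.compProd_apply (measurable_snd hs)]
    rfl
  have hint : Integrable (fun p : α × α => f p.2) (μ ⊗ₘ κ) := by
    refine Integrable.mono' (integrable_const 1) ((hf.comp measurable_snd).aestronglyMeasurable) ?_
    exact Eventually.of_forall fun p => by simpa [Real.norm_eq_abs] using hb p.2
  rw [hmap, integral_map measurable_snd.aemeasurable hf.aestronglyMeasurable,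
    Measure.integral_compProd hint]

lemma tv_algebra {A Af B Bf e : ℝ} (hA : 0 ≤ A) (hB : 0 < B) (he : 0 ≤ e)
    (hAf : |Af| ≤ A) (hBf : |Bf| ≤ B) (h1 : |Af - Bf| ≤ e) (h2 : |A - B| ≤ e) :
    |Af / A - Bf / B| ≤ 2 * e / B := by
  rcases eq_or_lt_of_le hA with hA0 | hA0
  · have hAf0 : Af = 0 := by
      have : |Af| = 0 := le_antisymm (hA0 ▸ hAf) (abs_nonneg _)
      exact abs_eq_zero.1 this
    have hBe : B ≤ e := by
      have := abs_le.1 h2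
      linarith [this.1]
    rw [hAf0, ← hA0]
    simp only [zero_div, zero_sub, abs_neg, abs_div, abs_of_pos hB]
    rw [div_le_div_iff₀ hB hB]
    nlinarith
  · rw [div_sub_div _ _ hA0.ne' hB.ne', abs_div, abs_of_pos (mul_pos hA0 hB),
      div_le_div_iff₀ (mul_pos hA0 hB) hB]
    have key : |Af * B - A * Bf| ≤ 2 * A * e := by
      have hrw : Af * B - A * Bf = Af * (B - A) + A * (Af - Bf) := by ring
      rw [hrw]
      calc |Af * (B - A) + A * (Af - Bf)| ≤ |Af * (B - A)| + |A * (Af - Bf)| := abs_add_le _ _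
        _ = |Af| * |B - A| + A * |Af - Bf| := by
            rw [abs_mul, abs_mul, abs_of_nonneg hA]
        _ ≤ A * e + A * e := by
            have h2' : |B - A| ≤ e := by rwa [abs_sub_comm]
            have := abs_nonneg Af
            nlinarith
        _ = 2 * A * e := by ring
    nlinarith [mul_le_mul_of_nonneg_right key hB.le]

lemma integrable_and_integral_eq (μ : Measure α) {φ : α → ℝ} (hφm : Measurable φ)
    (hφ0 : ∀ x, 0 ≤ φ x) (hfin : ∫⁻ x, ENNReal.ofReal (φ x) ∂μ ≠ ∞) :
    Integrable φ μ ∧ ∫ x, φ x ∂μ = (∫⁻ x, ENNReal.ofReal (φ x) ∂μ).toReal := by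
  have hint : Integrable φ μ := by
    refine ⟨hφm.aestronglyMeasurable, ?_⟩
    rw [hasFiniteIntegral_iff_ofReal (Eventually.of_forall hφ0)]
    exact hfin.lt_top
  exact ⟨hint, by
    rw [integral_eq_lintegral_of_nonneg_ae (Eventually.of_forall hφ0) hφm.aestronglyMeasurable]⟩

/-- Under Assumption (A), for every `n ≥ 1` and every nonnegative
`μ ∈ M₊(W_S)` with `μ(η_S) > 0` and `μ(n^{j_S(·)} W_S) < ∞`, the total variation distance
(expressed through test functions bounded by `1`) between `ℙ_μ(X_n ∈ · | n < τ_∂)` and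
`(Σ_i μ(n^{j_S(·)} η_{S,i}) ν_{S,i}) / (Σ_i μ(n^{j_S(·)} η_{S,i}))` is at most
`2 α_{S,n} μ(n^{j_S(·)} W_S) / μ(n^{j_S(·)} η_S)`. -/
theorem conditional_distribution_total_variation_bound
    (S : ℕ → Kernel α α) (hS : IsSubMarkovSemigroup S)
    {I : Type} {W : α → ℝ} {ν : I → Measure α} {η : I → α → ℝ} {a : ℕ → ℝ}
    (hA : AssumptionA S W ν η a) :
    ∀ n : ℕ, 1 ≤ n → ∀ μ : Measure α, μ ≠ 0 →
      (∫⁻ x, ENNReal.ofReal (W x) ∂μ) ≠ ∞ →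
      (0 < ∫⁻ x, ENNReal.ofReal (∑' i, η i x) ∂μ) →
      (∫⁻ x, (n : ℝ≥0∞) ^ (jfun S x) * ENNReal.ofReal (W x) ∂μ) ≠ ∞ →
      ∀ f : α → ℝ, Measurable f → (∀ x, |f x| ≤ 1) →
        |(∫ y, f y ∂(Measure.bind μ (fun x => S n x))) / (kmass S n μ).toReal -
            (∑' i, (∫⁻ x, (n : ℝ≥0∞) ^ (jfun S x) * ENNReal.ofReal (η i x) ∂μ).toReal *
                ∫ y, f y ∂(ν i)) /
              (∑' i, (∫⁻ x, (n : ℝ≥0∞) ^ (jfun S x) * ENNReal.ofReal (η i x) ∂μ).toReal)| ≤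
          2 * a n * (∫⁻ x, (n : ℝ≥0∞) ^ (jfun S x) * ENNReal.ofReal (W x) ∂μ).toReal /
            (∫⁻ x, (n : ℝ≥0∞) ^ (jfun S x) * ENNReal.ofReal (∑' i, η i x) ∂μ).toReal := by
  intro n hn μ hμ0 hμW hμη hμjW f hfm hfb
  have _ : Countable I := hA.countable
  haveI hIFK : IsFiniteKernel (S n) := ⟨⟨1, ENNReal.one_lt_top, fun x => hS.2.2 n x⟩⟩
  -- μ is a finite measure
  have hμuniv : μ Set.univ ≠ ∞ := by
    refine ne_top_of_le_ne_top hμW ?_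
    rw [← lintegral_one]
    exact lintegral_mono fun x => by
      simpa using ENNReal.one_le_ofReal.2 (hA.one_le_W x)
  haveI hμfin : IsFiniteMeasure μ := ⟨hμuniv.lt_top⟩
  -- constants
  have hθ0 : theta0 S ≠ 0 := hA.theta0_pos.ne'
  have hθt : theta0 S ≠ ∞ := (hA.theta0_le_one.trans_lt ENNReal.one_lt_top).ne
  have hθrpos : 0 < ((theta0 S).toReal)⁻¹ ^ n := by
    have := ENNReal.toReal_pos hθ0 hθt
    positivity
  set θi : ℝ := ((theta0 S).toReal)⁻¹ ^ n with hθi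
  obtain ⟨C, hC⟩ := hA.etanu_bdd
  have hnα : Nonempty α := by
    rcases isEmpty_or_nonempty α with h | h
    · exact absurd (Subsingleton.elim μ 0) hμ0
    · exact h
  have htW1 : ∀ i, 1 ≤ (∫⁻ y, ENNReal.ofReal (W y) ∂(ν i)).toReal := by
    intro i
    haveI := hA.nu_prob i
    have h1 : (1 : ℝ≥0∞) ≤ ∫⁻ y, ENNReal.ofReal (W y) ∂(ν i) := by
      have hone : (∫⁻ _, (1:ℝ≥0∞) ∂(ν i)) = 1 := by simp
      rw [← hone]
      exact lintegral_mono fun y => by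
        simpa using ENNReal.one_le_ofReal.2 (hA.one_le_W y)
    have := ENNReal.toReal_mono (hA.nu_W i) h1
    simpa using this
  have hC0 : 0 ≤ C := by
    obtain ⟨x₀⟩ := hnα
    have h1 : (0:ℝ) ≤ ∑' i, η i x₀ * (∫⁻ y, ENNReal.ofReal (W y) ∂(ν i)).toReal :=
      tsum_nonneg fun i => mul_nonneg (hA.eta_nonneg i x₀) ENNReal.toReal_nonneg
    nlinarith [hC x₀, hA.one_le_W x₀]
  -- pointwise domination of η sums
  have hη_le_ψ : ∀ i x, η i x ≤ η i x * (∫⁻ y, ENNReal.ofReal (W y) ∂(ν i)).toReal := fun i x =>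
    le_mul_of_one_le_right (hA.eta_nonneg i x) (htW1 i)
  have hηs_summ : ∀ x, Summable fun i => η i x :=
    fun x => (hA.summable_etanu x).of_nonneg_of_le (fun i => hA.eta_nonneg i x)
      (fun i => hη_le_ψ i x)
  have hηile : ∀ i x, η i x ≤ C * W x := fun i x =>
    le_trans (hη_le_ψ i x) (le_trans
      ((hA.summable_etanu x).le_tsum i fun j _ =>
        mul_nonneg (hA.eta_nonneg j x) ENNReal.toReal_nonneg) (hC x))
  have hηsle : ∀ x, (∑' i, η i x) ≤ C * W x := fun x =>
    le_trans (Summable.tsum_le_tsum (fun i => hη_le_ψ i x) (hηs_summ x) (hA.summable_etanu x)) (hC x)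
  -- the weight function g
  have hjm : Measurable (jfun S) := jfun_measurable hS hA
  have hj0 : ∀ x, 0 ≤ jfun S x := jfun_nonneg hA
  set g : α → ℝ := fun x => (n : ℝ) ^ (jfun S x) with hg
  have hnpos : (0 : ℝ) < n := by exact_mod_cast hn
  have hgm : Measurable g := measurable_const.pow hjm
  have hg1 : ∀ x, 1 ≤ g x := fun x => Real.one_le_rpow (by exact_mod_cast hn) (hj0 x)
  have hg0 : ∀ x, 0 ≤ g x := fun x => le_trans zero_le_one (hg1 x)
  have hGg : ∀ x, (n : ℝ≥0∞) ^ (jfun S x) = ENNReal.ofReal (g x) := fun x => by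
    rw [hg, ← ENNReal.ofReal_rpow_of_pos hnpos, ENNReal.ofReal_natCast]
  -- rewrite the goal lintegrals
  have hW_eq : (∫⁻ x, (n : ℝ≥0∞) ^ (jfun S x) * ENNReal.ofReal (W x) ∂μ) =
      ∫⁻ x, ENNReal.ofReal (g x * W x) ∂μ :=
    lintegral_congr fun x => by rw [hGg x, ← ENNReal.ofReal_mul (hg0 x)]
  have hηi_eq : ∀ i, (∫⁻ x, (n : ℝ≥0∞) ^ (jfun S x) * ENNReal.ofReal (η i x) ∂μ) =
      ∫⁻ x, ENNReal.ofReal (g x * η i x) ∂μ := fun i =>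
    lintegral_congr fun x => by rw [hGg x, ← ENNReal.ofReal_mul (hg0 x)]
  have hηs_eq : (∫⁻ x, (n : ℝ≥0∞) ^ (jfun S x) * ENNReal.ofReal (∑' i, η i x) ∂μ) =
      ∫⁻ x, ENNReal.ofReal (g x * ∑' i, η i x) ∂μ :=
    lintegral_congr fun x => by rw [hGg x, ← ENNReal.ofReal_mul (hg0 x)]
  rw [hW_eq, hηs_eq]
  simp only [hηi_eq]
  set LW : ℝ≥0∞ := ∫⁻ x, ENNReal.ofReal (g x * W x) ∂μ with hLW
  set Li : I → ℝ≥0∞ := fun i => ∫⁻ x, ENNReal.ofReal (g x * η i x) ∂μ with hLi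
  set Ls : ℝ≥0∞ := ∫⁻ x, ENNReal.ofReal (g x * ∑' i, η i x) ∂μ with hLs
  rw [hW_eq] at hμjW
  -- domination lemma
  have hdom : ∀ φ : α → ℝ, (∀ x, 0 ≤ φ x) → (∀ x, φ x ≤ C * W x) →
      (∫⁻ x, ENNReal.ofReal (g x * φ x) ∂μ) ≤ ENNReal.ofReal C * LW := by
    intro φ hφ0 hφle
    calc (∫⁻ x, ENNReal.ofReal (g x * φ x) ∂μ)
        ≤ ∫⁻ x, ENNReal.ofReal C * ENNReal.ofReal (g x * W x) ∂μ := by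
          refine lintegral_mono fun x => ?_
          rw [← ENNReal.ofReal_mul hC0]
          refine ENNReal.ofReal_le_ofReal ?_
          have := mul_le_mul_of_nonneg_left (hφle x) (hg0 x)
          nlinarith
      _ = ENNReal.ofReal C * LW := lintegral_const_mul _ ((hgm.mul hA.W_meas).ennreal_ofReal)
  have hLi_fin : ∀ i, Li i ≠ ∞ := fun i =>
    ne_top_of_le_ne_top (ENNReal.mul_ne_top ENNReal.ofReal_ne_top hμjW)
      (hdom (fun x => η i x) (hA.eta_nonneg i) (hηile i))
  have hLs_fin : Ls ≠ ∞ :=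
    ne_top_of_le_ne_top (ENNReal.mul_ne_top ENNReal.ofReal_ne_top hμjW)
      (hdom _ (fun x => tsum_nonneg fun i => hA.eta_nonneg i x) hηsle)
  -- Tonelli for families
  have hTon : ∀ φ : I → α → ℝ, (∀ i, Measurable (φ i)) → (∀ i x, 0 ≤ φ i x) →
      (∀ x, Summable (φ · x)) →
      (∫⁻ x, ENNReal.ofReal (g x * ∑' i, φ i x) ∂μ) =
        ∑' i, ∫⁻ x, ENNReal.ofReal (g x * φ i x) ∂μ := by
    intro φ hφm hφ0 hφs
    rw [← lintegral_tsum (f := fun i x => ENNReal.ofReal (g x * φ i x)) fun i => ((hgm.mul (hφm i)).ennreal_ofReal).aemeasurable]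
    refine lintegral_congr fun x => ?_
    rw [← ENNReal.ofReal_tsum_of_nonneg (fun i => mul_nonneg (hg0 x) (hφ0 i x))
      ((hφs x).mul_left (g x))]
    congr 1
    exact (tsum_mul_left).symm
  have hLs_sum : Ls = ∑' i, Li i :=
    hTon (fun i x => η i x) hA.eta_meas hA.eta_nonneg hηs_summ
  have hLs_pos : 0 < Ls := by
    refine lt_of_lt_of_le hμη (lintegral_mono fun x => ?_)
    exact ENNReal.ofReal_le_ofReal
      (le_mul_of_one_le_left (tsum_nonneg fun i => hA.eta_nonneg i x) (hg1 x))
  have hD : 0 < Ls.toReal := ENNReal.toReal_pos hLs_pos.ne' hLs_fin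
  have hB_eq : Ls.toReal = ∑' i, (Li i).toReal := by
    rw [hLs_sum, ENNReal.tsum_toReal_eq hLi_fin]
  -- real-variable versions
  obtain ⟨hIW, hIW_eq⟩ := integrable_and_integral_eq μ (hgm.mul hA.W_meas)
    (fun x => mul_nonneg (hg0 x) (le_trans zero_le_one (hA.one_le_W x))) hμjW
  have hIηi : ∀ i, Integrable (fun x => g x * η i x) μ ∧
      ∫ x, g x * η i x ∂μ = (Li i).toReal := fun i =>
    integrable_and_integral_eq μ (hgm.mul (hA.eta_meas i))
      (fun x => mul_nonneg (hg0 x) (hA.eta_nonneg i x)) (hLi_fin i)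
  -- integrability over ν i
  have hνint : ∀ (φ : α → ℝ), Measurable φ → (∀ x, |φ x| ≤ 1) → ∀ i,
      |∫ y, φ y ∂(ν i)| ≤ 1 := by
    intro φ hφm hφb i
    haveI := hA.nu_prob i
    have hint : Integrable φ (ν i) :=
      Integrable.mono' (integrable_const 1) hφm.aestronglyMeasurable
        (Eventually.of_forall fun x => by simpa [Real.norm_eq_abs] using hφb x)
    calc |∫ y, φ y ∂(ν i)| ≤ ∫ y, |φ y| ∂(ν i) := by
          simpa [Real.norm_eq_abs] using norm_integral_le_integral_norm φ (μ := ν i)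
      _ ≤ ∫ _, (1:ℝ) ∂(ν i) := integral_mono hint.abs (integrable_const 1) hφb
      _ = 1 := by simp
  -- the key integrated estimate
  have hE : ∀ φ : α → ℝ, Measurable φ → (∀ x, |φ x| ≤ 1) →
      |θi * (∫ y, φ y ∂(Measure.bind μ (fun x => S n x))) -
        ∑' i, (Li i).toReal * ∫ y, φ y ∂(ν i)| ≤ a n * LW.toReal := by
    intro φ hφm hφb
    set c : I → ℝ := fun i => ∫ y, φ y ∂(ν i) with hc
    have hc1 : ∀ i, |c i| ≤ 1 := hνint φ hφm hφb
    set T : α → ℝ := fun x => ∑' i, η i x * c i with hT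
    have hTsum : ∀ x, Summable fun i => |η i x * c i| := by
      intro x
      refine (hA.summable_etanu x).of_nonneg_of_le (fun i => abs_nonneg _) fun i => ?_
      rw [abs_mul, abs_of_nonneg (hA.eta_nonneg i x)]
      exact mul_le_mul_of_nonneg_left ((hc1 i).trans (htW1 i)) (hA.eta_nonneg i x)
    have hTm : Measurable T :=
      measurable_tsum_real (fun i => (hA.eta_meas i).mul_const (c i)) hTsum
    have hTle : ∀ x, |T x| ≤ C * W x := by
      intro x
      have hTsn : Summable fun i => ‖η i x * c i‖ := by
        simpa only [Real.norm_eq_abs] using hTsum x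
      calc |T x| ≤ ∑' i, ‖η i x * c i‖ := by
            rw [← Real.norm_eq_abs]
            exact norm_tsum_le_tsum_norm hTsn
        _ ≤ ∑' i, η i x * (∫⁻ y, ENNReal.ofReal (W y) ∂(ν i)).toReal := by
            refine Summable.tsum_le_tsum (fun i => ?_) hTsn (hA.summable_etanu x)
            rw [Real.norm_eq_abs, abs_mul, abs_of_nonneg (hA.eta_nonneg i x)]
            exact mul_le_mul_of_nonneg_left ((hc1 i).trans (htW1 i)) (hA.eta_nonneg i x)
        _ ≤ C * W x := hC x
    -- pointwise bound
    set If : α → ℝ := fun x => ∫ y, φ y ∂(S n x) with hIf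
    have hIfm : Measurable If := by
      have : StronglyMeasurable (Function.uncurry fun (_ : α) (y : α) => φ y) :=
        hφm.stronglyMeasurable.comp_measurable measurable_snd
      exact this.integral_kernel_prod_right.measurable
    have hpt : ∀ x, |θi * If x - g x * T x| ≤ a n * (g x * W x) := by
      intro x
      have happ := hA.approx φ hφm 1 zero_le_one
        (fun y => by simpa using (hφb y).trans (hA.one_le_W y)) n hn x
      have hgx : g x ≠ 0 := (lt_of_lt_of_le zero_lt_one (hg1 x)).ne'
      have hginv : (n : ℝ) ^ (-(jfun S x)) = (g x)⁻¹ := by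
        rw [Real.rpow_neg (le_of_lt hnpos)]
      have hrw : g x * (θi * (n : ℝ) ^ (-(jfun S x)) * If x - T x) =
          θi * If x - g x * T x := by
        rw [hginv]
        calc g x * (θi * (g x)⁻¹ * If x - T x)
            = (g x * (g x)⁻¹) * (θi * If x) - g x * T x := by ring
          _ = θi * If x - g x * T x := by rw [mul_inv_cancel₀ hgx, one_mul]
      calc |θi * If x - g x * T x| = |g x| * |θi * (n : ℝ) ^ (-(jfun S x)) * If x - T x| := by
            rw [← abs_mul, hrw]
        _ ≤ g x * (a n * W x * 1) := by
            rw [abs_of_nonneg (hg0 x)]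
            exact mul_le_mul_of_nonneg_left happ (hg0 x)
        _ = a n * (g x * W x) := by ring
    -- integrability
    have hgT_int : Integrable (fun x => g x * T x) μ := by
      refine Integrable.mono' (hIW.const_mul C) ((hgm.mul hTm).aestronglyMeasurable) ?_
      refine Eventually.of_forall fun x => ?_
      rw [Real.norm_eq_abs, abs_mul, abs_of_nonneg (hg0 x)]
      calc g x * |T x| ≤ g x * (C * W x) :=
            mul_le_mul_of_nonneg_left (hTle x) (hg0 x)
        _ = C * (g x * W x) := by ring
    have hIf_int : Integrable (fun x => θi * If x) μ := by
      refine Integrable.mono' (hIW.const_mul (a n + C)) ?_ ?_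
      · exact ((hIfm.const_mul θi)).aestronglyMeasurable
      · refine Eventually.of_forall fun x => ?_
        rw [Real.norm_eq_abs]
        have h1 := hpt x
        have h2 : |g x * T x| ≤ C * (g x * W x) := by
          rw [abs_mul, abs_of_nonneg (hg0 x)]
          calc g x * |T x| ≤ g x * (C * W x) :=
                mul_le_mul_of_nonneg_left (hTle x) (hg0 x)
            _ = C * (g x * W x) := by ring
        calc |θi * If x| ≤ |θi * If x - g x * T x| + |g x * T x| := by
              have := abs_sub_abs_le_abs_sub (θi * If x) (g x * T x)
              have := abs_add_le (θi * If x - g x * T x) (g x * T x)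
              calc |θi * If x| = |(θi * If x - g x * T x) + g x * T x| := by ring_nf
                _ ≤ |θi * If x - g x * T x| + |g x * T x| := abs_add_le _ _
          _ ≤ a n * (g x * W x) + C * (g x * W x) := add_le_add h1 h2
          _ = (a n + C) * (g x * W x) := by ring
    -- integrated inequality
    have hstep : |∫ x, θi * If x ∂μ - ∫ x, g x * T x ∂μ| ≤ a n * LW.toReal := by
      rw [← integral_sub hIf_int hgT_int]
      calc |∫ x, (θi * If x - g x * T x) ∂μ| ≤ ∫ x, |θi * If x - g x * T x| ∂μ := by
            simpa [Real.norm_eq_abs] using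
              norm_integral_le_integral_norm (fun x => θi * If x - g x * T x) (μ := μ)
        _ ≤ ∫ x, a n * (g x * W x) ∂μ :=
            integral_mono (hIf_int.sub hgT_int).abs (hIW.const_mul (a n)) hpt
        _ = a n * LW.toReal := by rw [integral_const_mul]; exact congrArg (a n * ·) hIW_eq
    -- identify the two integrals
    have hbind : ∫ x, θi * If x ∂μ = θi * ∫ y, φ y ∂(Measure.bind μ (fun x => S n x)) := by
      rw [integral_const_mul, integral_bind_kernel μ (S n) hφm hφb]
    have hswap : ∫ x, g x * T x ∂μ = ∑' i, (Li i).toReal * c i := by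
      have hptw : (fun x => g x * T x) = fun x => ∑' i, (g x * η i x) * c i := by
        funext x
        rw [hT]
        rw [← tsum_mul_left]
        refine tsum_congr fun i => by ring
      rw [hptw]
      have hfin' : (∑' i, ∫⁻ x, ‖(g x * η i x) * c i‖ₑ ∂μ) ≠ ∞ := by
        have heach : ∀ i, (∫⁻ x, ‖(g x * η i x) * c i‖ₑ ∂μ) ≤ Li i := by
          intro i
          refine lintegral_mono fun x => ?_
          rw [← ofReal_norm, Real.norm_eq_abs, abs_mul, abs_mul,
            abs_of_nonneg (hg0 x), abs_of_nonneg (hA.eta_nonneg i x)]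
          refine ENNReal.ofReal_le_ofReal ?_
          calc g x * η i x * |c i| ≤ g x * η i x * 1 :=
                mul_le_mul_of_nonneg_left (hc1 i)
                  (mul_nonneg (hg0 x) (hA.eta_nonneg i x))
            _ = g x * η i x := by ring
        refine ne_top_of_le_ne_top ?_ (ENNReal.tsum_le_tsum heach)
        rw [← hLs_sum]
        exact hLs_fin
      rw [integral_tsum (f := fun i x => (g x * η i x) * c i)
        (fun i => (((hgm.mul (hA.eta_meas i)).mul_const (c i)).aestronglyMeasurable)) hfin']
      refine tsum_congr fun i => ?_
      rw [integral_mul_const, (hIηi i).2]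
    rw [hbind, hswap] at hstep
    exact hstep
  -- apply to f and to the constant function 1
  have hEf := hE f hfm hfb
  have hE1 := hE (fun _ => 1) measurable_const (fun x => by norm_num)
  have hones : ∀ i, ∫ y, (1:ℝ) ∂(ν i) = 1 := by
    intro i
    haveI := hA.nu_prob i
    simp
  rw [show (∑' i, (Li i).toReal * ∫ y, (1:ℝ) ∂(ν i)) = ∑' i, (Li i).toReal from
    tsum_congr fun i => by rw [hones i, mul_one]] at hE1
  have h1bind : ∫ y, (1:ℝ) ∂(Measure.bind μ (fun x => S n x)) = (kmass S n μ).toReal := by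
    rw [integral_const, smul_eq_mul, mul_one]
    rfl
  rw [h1bind] at hE1
  -- bind measure is finite, and |∫ f d bind| ≤ kmass.toReal
  haveI hbfin : IsFiniteMeasure (Measure.bind μ (fun x => S n x)) := by
    refine ⟨?_⟩
    rw [Measure.bind_apply MeasurableSet.univ (Kernel.measurable (S n)).aemeasurable]
    calc (∫⁻ x, S n x Set.univ ∂μ) ≤ ∫⁻ _, 1 ∂μ := lintegral_mono fun x => hS.2.2 n x
      _ = μ Set.univ := lintegral_one
      _ < ∞ := hμuniv.lt_top
  have hfbind_int : Integrable f (Measure.bind μ (fun x => S n x)) :=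
    Integrable.mono' (integrable_const 1) hfm.aestronglyMeasurable
      (Eventually.of_forall fun x => by simpa [Real.norm_eq_abs] using hfb x)
  have hAf_le : |∫ y, f y ∂(Measure.bind μ (fun x => S n x))| ≤ (kmass S n μ).toReal := by
    calc |∫ y, f y ∂(Measure.bind μ (fun x => S n x))|
        ≤ ∫ y, |f y| ∂(Measure.bind μ (fun x => S n x)) := by
          simpa [Real.norm_eq_abs] using
            norm_integral_le_integral_norm f (μ := Measure.bind μ (fun x => S n x))
      _ ≤ ∫ _, (1:ℝ) ∂(Measure.bind μ (fun x => S n x)) :=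
          integral_mono hfbind_int.abs (integrable_const 1) hfb
      _ = (kmass S n μ).toReal := by
          rw [integral_const, smul_eq_mul, mul_one]
          rfl
  -- summability facts for B
  have hLiR_summ : Summable fun i => (Li i).toReal :=
    ENNReal.summable_toReal (by rw [← hLs_sum]; exact hLs_fin)
  have hBfn_summ : Summable fun i => ‖(Li i).toReal * ∫ y, f y ∂(ν i)‖ := by
    refine hLiR_summ.of_nonneg_of_le (fun i => norm_nonneg _) fun i => ?_
    rw [Real.norm_eq_abs, abs_mul, abs_of_nonneg ENNReal.toReal_nonneg]
    exact le_trans (mul_le_mul_of_nonneg_left (hνint f hfm hfb i) ENNReal.toReal_nonneg)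
      (by rw [mul_one])
  have hBf_le : |∑' i, (Li i).toReal * ∫ y, f y ∂(ν i)| ≤ ∑' i, (Li i).toReal := by
    calc |∑' i, (Li i).toReal * ∫ y, f y ∂(ν i)|
        ≤ ∑' i, ‖(Li i).toReal * ∫ y, f y ∂(ν i)‖ := by
          rw [← Real.norm_eq_abs]
          exact norm_tsum_le_tsum_norm hBfn_summ
      _ ≤ ∑' i, (Li i).toReal := by
          refine Summable.tsum_le_tsum (fun i => ?_) hBfn_summ hLiR_summ
          rw [Real.norm_eq_abs, abs_mul, abs_of_nonneg ENNReal.toReal_nonneg]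
          exact le_trans (mul_le_mul_of_nonneg_left (hνint f hfm hfb i)
            ENNReal.toReal_nonneg) (by rw [mul_one])
  -- final algebra
  have hfrac : (∫ y, f y ∂(Measure.bind μ (fun x => S n x))) / (kmass S n μ).toReal =
      (θi * ∫ y, f y ∂(Measure.bind μ (fun x => S n x))) / (θi * (kmass S n μ).toReal) := by
    rw [mul_div_mul_left _ _ hθrpos.ne']
  rw [hfrac, hB_eq]
  have hres := tv_algebra (A := θi * (kmass S n μ).toReal)
    (Af := θi * ∫ y, f y ∂(Measure.bind μ (fun x => S n x)))
    (B := ∑' i, (Li i).toReal) (Bf := ∑' i, (Li i).toReal * ∫ y, f y ∂(ν i))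
    (e := a n * LW.toReal)
    (mul_nonneg hθrpos.le ENNReal.toReal_nonneg)
    (hB_eq ▸ hD)
    (mul_nonneg (hA.a_nonneg n) ENNReal.toReal_nonneg)
    (by rw [abs_mul, abs_of_pos hθrpos]
        exact mul_le_mul_of_nonneg_left hAf_le hθrpos.le)
    hBf_le hEf hE1
  have h2 : (2:ℝ) * (a n * LW.toReal) = 2 * a n * LW.toReal := by ring
  rw [h2] at hres
  simp only [hLi] at hres ⊢
  exact hres
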